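/- For every positive integer d, the generating function for the number of Schmidt type d-fold partition diamonds is given by ∑_{n≥0} s_d(n) q^n = ∏_{n≥1} A_d(q^n) / (1 - q^n)^{d+1}, as an identity of formal power series in q over ℤ, where A_d is the d-th Eulerian polynomial. -/

import Mathlib

open Finset PowerSeries

/-- A `d`-fold partition diamond: nonnegative integers `a 0, a 1, …` together with
`b k j` (representing `b_{k+1, j+1}`) satisfying `a k ≥ b k j ≥ a (k+1)`,
with all but finitely many entries equal to zero. -/
structure DFold (d : ℕ) where
  a : ℕ → ℕ
  b : ℕ → Fin d → ℕ
  upper : ∀ k j, b k j ≤ a k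
  lower : ∀ k j, a (k + 1) ≤ b k j
  fin : ∃ N, ∀ k, N ≤ k → a k = 0

/-- `sFold d n`: the number of Schmidt type `d`-fold partition diamonds of `n`
(only the links `a k` are summed). -/
noncomputable def sFold (d n : ℕ) : ℕ :=
  Set.ncard {D : DFold d | (∑ᶠ k, D.a k) = n}

/-- The Eulerian polynomials: `A 0 = 1` and
`A d = (1 + (d-1) q) A (d-1) + q (1-q) (A (d-1))'` for `d ≥ 1`. -/
noncomputable def eulerian : ℕ → Polynomial ℤ
  | 0 => 1
  | e + 1 =>
      (1 + (e : Polynomial ℤ) * Polynomial.X) * eulerian e +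
        Polynomial.X * (1 - Polynomial.X) * Polynomial.derivative (eulerian e)


/-- `∑ (c+1)^d X^c`. -/
noncomputable def Eser (d : ℕ) : ℤ⟦X⟧ := PowerSeries.mk fun c => ((c : ℤ) + 1) ^ d

lemma Eser_succ (d : ℕ) :
    Eser (d + 1) = Eser d + PowerSeries.X * d⁄dX ℤ (Eser d) := by
  ext c
  cases c with
  | zero => simp [Eser]
  | succ c =>
      simp [Eser, PowerSeries.coeff_succ_X_mul, PowerSeries.coeff_derivative, pow_succ]
      ring

lemma euler_id (d : ℕ) :
    ((eulerian d : Polynomial ℤ) : ℤ⟦X⟧) = (1 - PowerSeries.X) ^ (d + 1) * Eser d := by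
  induction d with
  | zero =>
      have : Eser 0 = PowerSeries.mk 1 := by ext c; simp [Eser]
      rw [this, eulerian, Polynomial.coe_one, pow_one, mul_comm, mk_one_mul_one_sub_eq_one]
  | succ d ih =>
      have hD : d⁄dX ℤ ((eulerian d : Polynomial ℤ) : ℤ⟦X⟧)
          = ((Polynomial.derivative (eulerian d) : Polynomial ℤ) : ℤ⟦X⟧) := by
        rw [PowerSeries.derivative_coe]
      have hDrhs : d⁄dX ℤ ((1 - PowerSeries.X) ^ (d + 1) * Eser d)
          = (1 - PowerSeries.X) ^ (d + 1) * d⁄dX ℤ (Eser d)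
            - ((d : ℤ⟦X⟧) + 1) * (1 - PowerSeries.X) ^ d * Eser d := by
        rw [Derivation.leibniz, Derivation.leibniz_pow]
        have : d⁄dX ℤ (1 - PowerSeries.X) = -1 := by
          rw [map_sub]; simp
        rw [this]
        simp only [smul_eq_mul, Nat.add_sub_cancel, nsmul_eq_mul]
        push_cast
        ring
      have hcoe : ((eulerian (d+1) : Polynomial ℤ) : ℤ⟦X⟧)
          = (1 + ((d : Polynomial ℤ) : ℤ⟦X⟧) * PowerSeries.X) * ((eulerian d : Polynomial ℤ) : ℤ⟦X⟧)
            + PowerSeries.X * (1 - PowerSeries.X) *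
              ((Polynomial.derivative (eulerian d) : Polynomial ℤ) : ℤ⟦X⟧) := by
        show ((((1 + (d : Polynomial ℤ) * Polynomial.X) * eulerian d +
          Polynomial.X * (1 - Polynomial.X) * Polynomial.derivative (eulerian d)) : Polynomial ℤ) : ℤ⟦X⟧) = _
        push_cast [Polynomial.coe_add, Polynomial.coe_mul, Polynomial.coe_one,
          Polynomial.coe_X, Polynomial.coe_sub]
        rfl
      have hdd : ((d : Polynomial ℤ) : ℤ⟦X⟧) = (d : ℤ⟦X⟧) := map_natCast (Polynomial.coeToPowerSeries.ringHom) d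
      rw [hcoe, hdd, ← hD, ih, hDrhs, Eser_succ]
      ring

/-- Spacing map: `f(X) ↦ f(X^m)`. -/
noncomputable def sp (m : ℕ) (f : ℤ⟦X⟧) : ℤ⟦X⟧ :=
  PowerSeries.mk fun n => if m ∣ n then PowerSeries.coeff (R := ℤ) (n / m) f else 0

lemma coeff_sp (m n : ℕ) (f : ℤ⟦X⟧) :
    PowerSeries.coeff (R := ℤ) n (sp m f) = if m ∣ n then PowerSeries.coeff (R := ℤ) (n / m) f else 0 :=
  PowerSeries.coeff_mk _ _

lemma sp_mul (m : ℕ) (hm : m ≠ 0) (f g : ℤ⟦X⟧) :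
    sp m (f * g) = sp m f * sp m g := by
  have hmp : 0 < m := Nat.pos_of_ne_zero hm
  ext n
  rw [PowerSeries.coeff_mul, coeff_sp]
  have hterm : ∀ p ∈ antidiagonal n,
      PowerSeries.coeff (R := ℤ) p.1 (sp m f) * PowerSeries.coeff (R := ℤ) p.2 (sp m g)
        = if m ∣ p.1 ∧ m ∣ p.2 then
            PowerSeries.coeff (R := ℤ) (p.1 / m) f * PowerSeries.coeff (R := ℤ) (p.2 / m) g else 0 := by
    intro p _
    rw [coeff_sp, coeff_sp]
    by_cases h1 : m ∣ p.1 <;> by_cases h2 : m ∣ p.2 <;> simp [h1, h2]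
  rw [Finset.sum_congr rfl hterm]
  by_cases hn : m ∣ n
  · obtain ⟨q, rfl⟩ := hn
    simp only [dvd_mul_right, if_true, Nat.mul_div_cancel_left _ hmp]
    rw [PowerSeries.coeff_mul, ← Finset.sum_filter]
    refine (Finset.sum_nbij' (fun p => (p.1 / m, p.2 / m)) (fun p => (m * p.1, m * p.2))
      ?_ ?_ ?_ ?_ ?_).symm
    · rintro ⟨x, y⟩ hp
      simp only [Finset.mem_filter, Finset.HasAntidiagonal.mem_antidiagonal] at hp
      obtain ⟨hsum, ⟨i, rfl⟩, ⟨j, rfl⟩⟩ := hp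
      simp only [Finset.HasAntidiagonal.mem_antidiagonal, Nat.mul_div_cancel_left _ hmp]
      have : m * (i + j) = m * q := by rw [mul_add]; exact hsum
      exact Nat.eq_of_mul_eq_mul_left hmp this
    · rintro ⟨x, y⟩ hp
      simp only [Finset.HasAntidiagonal.mem_antidiagonal] at hp
      simp only [Finset.mem_filter, Finset.HasAntidiagonal.mem_antidiagonal]
      exact ⟨by rw [← mul_add, hp], Dvd.intro _ rfl, Dvd.intro _ rfl⟩
    · rintro ⟨x, y⟩ hp
      simp only [Finset.mem_filter, Finset.HasAntidiagonal.mem_antidiagonal] at hp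
      obtain ⟨hsum, ⟨i, rfl⟩, ⟨j, rfl⟩⟩ := hp
      simp [Nat.mul_div_cancel_left _ hmp]
    · rintro ⟨x, y⟩ hp
      simp [Nat.mul_div_cancel_left _ hmp]
    · rintro ⟨x, y⟩ hp
      simp
  · rw [if_neg hn]
    refine (Finset.sum_eq_zero ?_).symm
    intro p hp
    rw [Finset.HasAntidiagonal.mem_antidiagonal] at hp
    rw [if_neg]
    rintro ⟨h1, h2⟩
    exact hn (hp ▸ dvd_add h1 h2)

lemma sp_one (m : ℕ) (hm : m ≠ 0) : sp m 1 = 1 := by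
  have hmp : 0 < m := Nat.pos_of_ne_zero hm
  ext n
  rw [coeff_sp]
  rcases eq_or_ne n 0 with rfl | hn
  · simp
  · by_cases h : m ∣ n
    · obtain ⟨q, rfl⟩ := h
      have hq : q ≠ 0 := by rintro rfl; simp at hn
      simp [Nat.mul_div_cancel_left _ hmp, PowerSeries.coeff_one, hq, hn]
    · simp [h, PowerSeries.coeff_one, hn]

lemma sp_add (m : ℕ) (f g : ℤ⟦X⟧) : sp m (f + g) = sp m f + sp m g := by
  ext n
  simp only [coeff_sp, map_add, coeff_sp]
  split <;> simp

lemma sp_pow (m : ℕ) (hm : m ≠ 0) (f : ℤ⟦X⟧) (k : ℕ) : sp m (f ^ k) = sp m f ^ k := by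
  induction k with
  | zero => simpa using sp_one m hm
  | succ k ih => rw [pow_succ, pow_succ, sp_mul m hm, ih]

lemma sp_one_sub_X (m : ℕ) (hm : m ≠ 0) :
    sp m (1 - PowerSeries.X) = 1 - PowerSeries.X ^ m := by
  have hmp : 0 < m := Nat.pos_of_ne_zero hm
  ext n
  rw [coeff_sp]
  by_cases h : m ∣ n
  · obtain ⟨q, rfl⟩ := h
    have e1 : m * q = 0 ↔ q = 0 := by simp [hm]
    have e2 : m * q = m ↔ q = 1 := by
      constructor
      · intro hc; exact Nat.eq_of_mul_eq_mul_left hmp (by rw [hc, mul_one])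
      · rintro rfl; exact mul_one m
    simp only [dvd_mul_right, if_true, Nat.mul_div_cancel_left _ hmp, map_sub,
      PowerSeries.coeff_one, PowerSeries.coeff_X, PowerSeries.coeff_X_pow, e1, e2]
  · have h0 : n ≠ 0 := by rintro rfl; exact h (dvd_zero m)
    rw [if_neg h, map_sub, PowerSeries.coeff_one, PowerSeries.coeff_X_pow,
      if_neg h0, if_neg (by rintro rfl; exact h dvd_rfl)]
    ring

lemma sp_coe_poly (m : ℕ) (hm : m ≠ 0) (p : Polynomial ℤ) :
    sp m ((p : Polynomial ℤ) : ℤ⟦X⟧) = Polynomial.aeval ((PowerSeries.X : ℤ⟦X⟧) ^ m) p := by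
  have hmp : 0 < m := Nat.pos_of_ne_zero hm
  induction p using Polynomial.induction_on' with
  | add p q hp hq => rw [Polynomial.coe_add, sp_add, hp, hq, map_add]
  | monomial k a =>
      rw [Polynomial.coe_monomial, Polynomial.aeval_monomial, ← pow_mul,
        PowerSeries.X_pow_eq, ← PowerSeries.C_eq_algebraMap]
      ext n
      rw [coeff_sp, PowerSeries.coeff_monomial]
      have hR : PowerSeries.coeff (R := ℤ) n (PowerSeries.C a * PowerSeries.monomial (m * k) (1:ℤ))
          = a * (if n = m * k then 1 else 0) := by
        rw [PowerSeries.coeff_C_mul, PowerSeries.coeff_monomial]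
      rw [hR]
      by_cases h : m ∣ n
      · obtain ⟨q, rfl⟩ := h
        simp only [dvd_mul_right, if_true, PowerSeries.coeff_monomial,
          Nat.mul_div_cancel_left _ hmp]
        have : (m * q = m * k) ↔ (q = k) := by
          constructor
          · exact fun hc => Nat.eq_of_mul_eq_mul_left hmp hc
          · rintro rfl; rfl
        by_cases hqk : q = k
        · subst hqk; simp
        · rw [if_neg hqk, if_neg (fun hc => hqk (this.mp hc))]; ring
      · rw [if_neg h, if_neg (by rintro rfl; exact h ⟨k, rfl⟩)]; ring

/-- telescoping: Abel summation for antitone sequences. -/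
lemma tele (f : ℕ → ℕ) (hf : ∀ i, f (i + 1) ≤ f i) (k : ℕ) :
    ∑ i ∈ range k, (i + 1) * (f i - f (i + 1)) + k * f k = ∑ i ∈ range k, f i := by
  induction k with
  | zero => simp
  | succ k ih =>
      rw [Finset.sum_range_succ, Finset.sum_range_succ, ← ih]
      obtain ⟨z, hz⟩ : ∃ z, f k = f (k + 1) + z := ⟨f k - f (k + 1), by have := hf k; omega⟩
      rw [hz]
      have : f (k + 1) + z - f (k + 1) = z := by omega
      rw [this]
      ring

/-- telescoping for tails. -/
lemma tele2 (f : ℕ → ℕ) (hf : ∀ i, f (i + 1) ≤ f i) (i k : ℕ) (hik : i ≤ k) :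
    ∑ j ∈ Ico i k, (f j - f (j + 1)) = f i - f k := by
  induction k with
  | zero => have : i = 0 := by omega
            subst this; simp
  | succ k ih =>
      rcases Nat.lt_or_ge i (k + 1) with h | h
      · have hik' : i ≤ k := by omega
        rw [Finset.sum_Ico_succ_top hik', ih hik']
        have h1 : f (k+1) ≤ f k := hf k
        have h2 : f k ≤ f i := antitone_nat_of_succ_le hf hik'
        omega
      · have : i = k + 1 := by omega
        subst this; simp

lemma DFold.step {d : ℕ} (hd : 1 ≤ d) (D : DFold d) (i : ℕ) : D.a (i + 1) ≤ D.a i :=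
  le_trans (D.lower i ⟨0, hd⟩) (D.upper i ⟨0, hd⟩)

lemma DFold.mono {d : ℕ} (hd : 1 ≤ d) (D : DFold d) {i j : ℕ} (h : i ≤ j) :
    D.a j ≤ D.a i :=
  antitone_nat_of_succ_le (D.step hd) h

lemma DFold.sum_range {d : ℕ} (D : DFold d) {k : ℕ} (hsum : (∑ᶠ i, D.a i) = k)
    {M : ℕ} (hM : ∀ i, M ≤ i → D.a i = 0) : ∑ i ∈ range M, D.a i = k := by
  rw [← hsum]
  refine (finsum_eq_finset_sum_of_support_subset _ ?_).symm
  intro x hx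
  simp only [Function.mem_support] at hx
  simp only [Finset.coe_range, Set.mem_Iio]
  by_contra h
  exact hx (hM x (by omega))

lemma DFold.vanish {d : ℕ} (hd : 1 ≤ d) (D : DFold d) {k : ℕ}
    (hsum : (∑ᶠ i, D.a i) = k) : ∀ i, k ≤ i → D.a i = 0 := by
  intro i hi
  by_contra h
  obtain ⟨N₀, hN₀⟩ := D.fin
  set M := max (i + 1) N₀ with hMdef
  have hM : ∀ m, M ≤ m → D.a m = 0 := fun m hm => hN₀ m (by omega)
  have hs : ∑ m ∈ range M, D.a m = k := D.sum_range hsum hM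
  have h1 : ∑ m ∈ range (i+1), D.a m ≤ ∑ m ∈ range M, D.a m :=
    Finset.sum_le_sum_of_subset (Finset.range_subset_range.mpr (by omega))
  have h2 : ∀ m ∈ range (i+1), 1 ≤ D.a m := by
    intro m hm
    rw [Finset.mem_range] at hm
    have := D.mono hd (show m ≤ i by omega)
    omega
  have h3 : (i+1) ≤ ∑ m ∈ range (i+1), D.a m := by
    calc (i+1) = ∑ _m ∈ range (i+1), 1 := by simp
    _ ≤ _ := Finset.sum_le_sum h2
  omega

lemma DFold.a_le {d : ℕ} (hd : 1 ≤ d) (D : DFold d) {k : ℕ}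
    (hsum : (∑ᶠ i, D.a i) = k) (i : ℕ) : D.a i ≤ k := by
  have hs : ∑ m ∈ range k, D.a m = k := D.sum_range hsum (D.vanish hd hsum)
  rcases Nat.lt_or_ge i k with h | h
  · have := Finset.single_le_sum (f := D.a) (fun i _ => Nat.zero_le (D.a i))
      (Finset.mem_range.mpr h)
    omega
  · have h0 := D.vanish hd hsum i h
    omega

/-- The finite data type encoding a `d`-fold diamond of total size `k`. -/
def TT (d k : ℕ) : Type :=
  {p : (Fin k → Fin (k+1)) × (Fin k → Fin d → Fin (k+1)) //
    (∑ i : Fin k, (i.1 + 1) * (p.1 i).1 = k) ∧ ∀ i j, (p.2 i j).1 ≤ (p.1 i).1}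

noncomputable instance (d k : ℕ) : Fintype (TT d k) := by
  unfold TT
  classical
  infer_instance

/-- The reconstruction of the `a`-sequence from the difference data. -/
def aOf (k : ℕ) (c : Fin k → Fin (k+1)) (i : ℕ) : ℕ :=
  ∑ j ∈ Ico i k, (if h : j < k then (c ⟨j, h⟩).1 else 0)

lemma aOf_zero (k : ℕ) (c : Fin k → Fin (k+1)) (i : ℕ) (hi : k ≤ i) : aOf k c i = 0 := by
  unfold aOf
  rw [Finset.Ico_eq_empty (by omega), Finset.sum_empty]

lemma aOf_succ (k : ℕ) (c : Fin k → Fin (k+1)) (i : ℕ) (hi : i < k) :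
    aOf k c i = (c ⟨i, hi⟩).1 + aOf k c (i + 1) := by
  unfold aOf
  rw [Finset.sum_eq_sum_Ico_succ_bot hi, dif_pos hi]

lemma aOf_step (k : ℕ) (c : Fin k → Fin (k+1)) (i : ℕ) : aOf k c (i+1) ≤ aOf k c i := by
  rcases Nat.lt_or_ge i k with h | h
  · rw [aOf_succ k c i h]; omega
  · rw [aOf_zero k c i h, aOf_zero k c (i+1) (by omega)]

/-- Forward: diamond to data. -/
noncomputable def toTT (d k : ℕ) (hd : 1 ≤ d)
    (D : {D : DFold d // (∑ᶠ i, D.a i) = k}) : TT d k := by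
  refine ⟨⟨fun i => ⟨D.1.a i.1 - D.1.a (i.1+1), ?_⟩,
          fun i j => ⟨D.1.b i.1 j - D.1.a (i.1+1), ?_⟩⟩, ?_, ?_⟩
  · have := D.1.a_le hd D.2 i.1
    omega
  · have h1 := D.1.upper i.1 j
    have h2 := D.1.a_le hd D.2 i.1
    omega
  · have ht := tele D.1.a (D.1.step hd) k
    have hz : D.1.a k = 0 := D.1.vanish hd D.2 k le_rfl
    have hs : ∑ i ∈ range k, D.1.a i = k := D.1.sum_range D.2 (D.1.vanish hd D.2)
    rw [hz, mul_zero, add_zero] at ht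
    rw [Fin.sum_univ_eq_sum_range (fun i => (i + 1) * (D.1.a i - D.1.a (i+1)))]
    omega
  · intro i j
    have h1 := D.1.upper i.1 j
    simp only
    omega

/-- Backward: data to diamond. -/
noncomputable def ofTT (d k : ℕ) (hd : 1 ≤ d) (p : TT d k) :
    {D : DFold d // (∑ᶠ i, D.a i) = k} := by
  refine ⟨⟨aOf k p.1.1, fun i j => aOf k p.1.1 (i+1) +
      (if h : i < k then (p.1.2 ⟨i, h⟩ j).1 else 0), ?_, ?_, ⟨k, fun i hi => aOf_zero _ _ _ hi⟩⟩, ?_⟩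
  · intro i j
    show aOf k p.1.1 (i+1) + (if h : i < k then (p.1.2 ⟨i, h⟩ j).1 else 0) ≤ aOf k p.1.1 i
    rcases Nat.lt_or_ge i k with h | h
    · rw [dif_pos h, aOf_succ k p.1.1 i h]
      have := p.2.2 ⟨i, h⟩ j
      omega
    · rw [dif_neg (by omega), aOf_zero k p.1.1 i h, aOf_zero k p.1.1 (i+1) (by omega)]
  · intro i j
    exact Nat.le_add_right _ _
  · show (∑ᶠ i, aOf k p.1.1 i) = k
    have hsupp : (∑ᶠ i, aOf k p.1.1 i) = ∑ i ∈ range k, aOf k p.1.1 i := by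
      refine finsum_eq_finset_sum_of_support_subset _ ?_
      intro x hx
      simp only [Function.mem_support] at hx
      simp only [Finset.coe_range, Set.mem_Iio]
      by_contra h
      exact hx (aOf_zero k p.1.1 x (by omega))
    have ht := tele (aOf k p.1.1) (aOf_step k p.1.1) k
    have hz : aOf k p.1.1 k = 0 := aOf_zero k p.1.1 k le_rfl
    have hdiff : ∀ i ∈ range k, (i+1) * (aOf k p.1.1 i - aOf k p.1.1 (i+1))
        = (i+1) * (if h : i < k then (p.1.1 ⟨i, h⟩).1 else 0) := by
      intro i hi
      rw [Finset.mem_range] at hi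
      rw [aOf_succ k p.1.1 i hi, dif_pos hi]
      congr 1
      omega
    have hfin : ∑ i ∈ range k, ((i+1) * (if h : i < k then ((p.1.1 ⟨i, h⟩) : ℕ) else 0)) = k := by
      rw [← Fin.sum_univ_eq_sum_range
        (fun i => (i + 1) * (if h : i < k then ((p.1.1 ⟨i, h⟩) : ℕ) else 0)) k]
      have he : (∑ i : Fin k, (i.1 + 1) * (if h : i.1 < k then ((p.1.1 ⟨i.1, h⟩) : ℕ) else 0))
          = ∑ i : Fin k, (i.1 + 1) * ((p.1.1 i) : ℕ) := by
        refine Finset.sum_congr rfl fun i _ => ?_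
        rw [dif_pos i.isLt]
      rw [he]
      exact p.2.1
    rw [hz, mul_zero, add_zero] at ht
    rw [hsupp, ← ht, Finset.sum_congr rfl hdiff, hfin]

lemma DFold.ext' {d : ℕ} {D E : DFold d} (h1 : D.a = E.a) (h2 : D.b = E.b) : D = E := by
  cases D; cases E
  simp only at h1 h2
  subst h1; subst h2
  rfl

noncomputable def dfoldEquiv (d k : ℕ) (hd : 1 ≤ d) :
    {D : DFold d // (∑ᶠ i, D.a i) = k} ≃ TT d k where
  toFun := toTT d k hd
  invFun := ofTT d k hd
  left_inv := by
    intro D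
    apply Subtype.ext
    apply DFold.ext'
    · funext i
      show aOf k _ i = D.1.a i
      rcases Nat.lt_or_ge i k with h | h
      · unfold aOf
        have hcong : ∀ j ∈ Ico i k,
            (if hj : j < k then ((toTT d k hd D).1.1 ⟨j, hj⟩ : ℕ) else 0)
              = D.1.a j - D.1.a (j+1) := by
          intro j hj
          rw [Finset.mem_Ico] at hj
          rw [dif_pos hj.2]
          rfl
        rw [Finset.sum_congr rfl hcong, tele2 D.1.a (D.1.step hd) i k (by omega),
          D.1.vanish hd D.2 k le_rfl]
        omega
      · rw [aOf_zero k _ i h, D.1.vanish hd D.2 i h]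
    · funext i j
      show aOf k _ (i+1) + _ = D.1.b i j
      rcases Nat.lt_or_ge i k with h | h
      · rw [dif_pos h]
        have ha : aOf k (toTT d k hd D).1.1 (i+1) = D.1.a (i+1) := by
          rcases Nat.lt_or_ge (i+1) k with h2 | h2
          · unfold aOf
            have hcong : ∀ j ∈ Ico (i+1) k,
                (if hj : j < k then ((toTT d k hd D).1.1 ⟨j, hj⟩ : ℕ) else 0)
                  = D.1.a j - D.1.a (j+1) := by
              intro j hj
              rw [Finset.mem_Ico] at hj
              rw [dif_pos hj.2]
              rfl
            rw [Finset.sum_congr rfl hcong, tele2 D.1.a (D.1.step hd) (i+1) k (by omega),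
              D.1.vanish hd D.2 k le_rfl]
            omega
          · rw [aOf_zero k _ (i+1) h2, D.1.vanish hd D.2 (i+1) h2]
        rw [ha]
        show D.1.a (i+1) + (D.1.b i j - D.1.a (i+1)) = D.1.b i j
        have := D.1.lower i j
        omega
      · rw [dif_neg (by omega), aOf_zero k _ (i+1) (by omega)]
        have h1 := D.1.upper i j
        have h2 := D.1.vanish hd D.2 i h
        omega
  right_inv := by
    intro p
    apply Subtype.ext
    apply Prod.ext
    · funext i
      apply Fin.ext
      show aOf k p.1.1 i.1 - aOf k p.1.1 (i.1+1) = (p.1.1 i : ℕ)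
      rw [aOf_succ k p.1.1 i.1 i.isLt]
      simp [Fin.eta]
    · funext i j
      apply Fin.ext
      show (ofTT d k hd p).1.b i.1 j - (ofTT d k hd p).1.a (i.1+1) = (p.1.2 i j : ℕ)
      show (aOf k p.1.1 (i.1+1) + (if h : i.1 < k then (p.1.2 ⟨i.1, h⟩ j : ℕ) else 0))
          - aOf k p.1.1 (i.1+1) = (p.1.2 i j : ℕ)
      rw [dif_pos i.isLt]
      simp [Fin.eta]

lemma sFold_eq_card (d k : ℕ) (hd : 1 ≤ d) : sFold d k = Fintype.card (TT d k) := by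
  rw [sFold, ← Nat.card_coe_set_eq, ← Nat.card_eq_fintype_card]
  exact Nat.card_congr (dfoldEquiv d k hd)

noncomputable def ttSigmaEquiv (d k : ℕ) :
    TT d k ≃ Σ c : {c : Fin k → Fin (k+1) // ∑ i : Fin k, (i.1 + 1) * (c i : ℕ) = k},
      (∀ _i : Fin k, Fin d → Fin ((c.1 _i : ℕ) + 1)) where
  toFun p := ⟨⟨p.1.1, p.2.1⟩, fun i j => ⟨(p.1.2 i j : ℕ), Nat.lt_succ_of_le (p.2.2 i j)⟩⟩
  invFun q := ⟨⟨q.1.1, fun i j => ⟨(q.2 i j : ℕ),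
      Nat.lt_succ_of_le (le_trans (Nat.le_of_lt_succ (q.2 i j).2)
        (Nat.le_of_lt_succ (q.1.1 i).2))⟩⟩,
    q.1.2, fun i j => Nat.le_of_lt_succ (q.2 i j).2⟩
  left_inv p := rfl
  right_inv q := rfl

lemma card_TT (d k : ℕ) :
    Fintype.card (TT d k)
      = ∑ c ∈ Finset.univ.filter
          (fun c : Fin k → Fin (k+1) => ∑ i : Fin k, (i.1 + 1) * (c i : ℕ) = k),
        ∏ i : Fin k, ((c i : ℕ) + 1) ^ d := by
  classical
  rw [Fintype.card_congr (ttSigmaEquiv d k), Fintype.card_sigma]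
  trans (∑ c : {c : Fin k → Fin (k+1) // ∑ i : Fin k, (i.1 + 1) * (c i : ℕ) = k},
      ∏ i : Fin k, ((c.1 i : ℕ) + 1) ^ d)
  · refine Finset.sum_congr rfl fun c _ => ?_
    rw [Fintype.card_pi]
    refine Finset.prod_congr rfl fun i _ => ?_
    rw [Fintype.card_fun, Fintype.card_fin, Fintype.card_fin]
  · exact (Finset.sum_subtype
      (Finset.univ.filter
        (fun c : Fin k → Fin (k+1) => ∑ i : Fin k, (i.1 + 1) * (c i : ℕ) = k))
      (fun x => by simp) (fun c => ∏ i : Fin k, ((c i : ℕ) + 1) ^ d)).symm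

lemma prod_ite_all {s : Finset ℕ} (P : ℕ → Prop) [DecidablePred P] (g : ℕ → ℤ) :
    ∏ m ∈ s, (if P m then g m else 0)
      = if ∀ m ∈ s, P m then ∏ m ∈ s, g m else 0 := by
  split_ifs with h
  · exact Finset.prod_congr rfl fun m hm => if_pos (h m hm)
  · push_neg at h
    obtain ⟨m, hm, hPm⟩ := h
    exact Finset.prod_eq_zero hm (if_neg hPm)

lemma sum_Icc_eq_fin {M : Type*} [AddCommMonoid M] (N k : ℕ) (hkN : k ≤ N) (F : ℕ → M)
    (hF : ∀ m, k < m → F m = 0) :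
    ∑ m ∈ Finset.Icc 1 N, F m = ∑ i : Fin k, F (i.1 + 1) := by
  rw [← Finset.sum_subset (Finset.Icc_subset_Icc_right hkN)
    (fun m hm hm' => hF m (by simp only [Finset.mem_Icc] at hm hm'; omega))]
  rw [← Finset.Ico_add_one_right_eq_Icc, Finset.sum_Ico_eq_sum_range]
  rw [Fin.sum_univ_eq_sum_range (fun i => F (i + 1))]
  exact Finset.sum_congr rfl fun i _ => by rw [add_comm]

lemma prod_Icc_eq_fin {M : Type*} [CommMonoid M] (N k : ℕ) (hkN : k ≤ N) (F : ℕ → M)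
    (hF : ∀ m, k < m → F m = 1) :
    ∏ m ∈ Finset.Icc 1 N, F m = ∏ i : Fin k, F (i.1 + 1) := by
  rw [← Finset.prod_subset (Finset.Icc_subset_Icc_right hkN)
    (fun m hm hm' => hF m (by simp only [Finset.mem_Icc] at hm hm'; omega))]
  rw [← Finset.Ico_add_one_right_eq_Icc, Finset.prod_Ico_eq_prod_range]
  rw [Fin.prod_univ_eq_prod_range (fun i => F (i + 1))]
  exact Finset.prod_congr rfl fun i _ => by rw [add_comm]

noncomputable def lOf (k : ℕ) (c : Fin k → Fin (k+1)) : ℕ →₀ ℕ :=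
  ∑ i : Fin k, Finsupp.single (i.1 + 1) ((i.1 + 1) * (c i : ℕ))

lemma lOf_apply (k : ℕ) (c : Fin k → Fin (k+1)) (j : ℕ) (hj : j < k) :
    lOf k c (j + 1) = (j + 1) * (c ⟨j, hj⟩ : ℕ) := by
  rw [lOf, Finsupp.finset_sum_apply]
  rw [Finset.sum_eq_single (⟨j, hj⟩ : Fin k)]
  · rw [Finsupp.single_apply, if_pos rfl]
  · intro i _ hne
    rw [Finsupp.single_apply, if_neg]
    intro hc
    exact hne (Fin.ext (show i.1 = j by omega))
  · intro h
    exact absurd (Finset.mem_univ _) h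

lemma lOf_big (k : ℕ) (c : Fin k → Fin (k+1)) (m : ℕ) (hm : m = 0 ∨ k < m) :
    lOf k c m = 0 := by
  rw [lOf, Finsupp.finset_sum_apply]
  refine Finset.sum_eq_zero fun i _ => ?_
  rw [Finsupp.single_apply, if_neg]
  intro hc
  have := i.isLt
  omega

lemma coeff_prod_Em (d k N : ℕ) (hkN : k ≤ N) :
    PowerSeries.coeff (R := ℤ) k (∏ m ∈ Finset.Icc 1 N, sp m (Eser d))
      = ∑ c ∈ Finset.univ.filter
          (fun c : Fin k → Fin (k+1) => ∑ i : Fin k, (i.1 + 1) * (c i : ℕ) = k),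
        ∏ i : Fin k, ((c i : ℕ) + 1 : ℤ) ^ d := by
  classical
  rw [PowerSeries.coeff_prod]
  have hterm : ∀ l ∈ Finset.finsuppAntidiag (Finset.Icc 1 N) k,
      (∏ m ∈ Finset.Icc 1 N, PowerSeries.coeff (R := ℤ) (l m) (sp m (Eser d)))
        = if ∀ m ∈ Finset.Icc 1 N, m ∣ l m
            then ∏ m ∈ Finset.Icc 1 N, ((l m / m : ℕ) + 1 : ℤ) ^ d else 0 := by
    intro l _
    rw [← prod_ite_all]
    refine Finset.prod_congr rfl fun m hm => ?_
    rw [coeff_sp]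
    split_ifs with h
    · rw [Eser, PowerSeries.coeff_mk]
    · rfl
  rw [Finset.sum_congr rfl hterm, ← Finset.sum_filter]
  -- facts about members of the filtered antidiagonal
  have lfacts : ∀ l : ℕ →₀ ℕ, l ∈ Finset.finsuppAntidiag (Finset.Icc 1 N) k →
      (∀ m ∈ Finset.Icc 1 N, m ∣ l m) →
      (∑ m ∈ Finset.Icc 1 N, l m = k) ∧ (∀ m, l m ≤ k) ∧ (∀ m, k < m → l m = 0) := by
    intro l hl hdvd
    rw [Finset.mem_finsuppAntidiag] at hl
    obtain ⟨hsum, hsupp⟩ := hl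
    have hsum' : ∑ m ∈ Finset.Icc 1 N, l m = k := hsum
    have hout : ∀ m, m ∉ Finset.Icc 1 N → l m = 0 := by
      intro m hm
      by_contra h
      exact hm (hsupp (Finsupp.mem_support_iff.mpr h))
    have hle : ∀ m, l m ≤ k := by
      intro m
      by_cases hm : m ∈ Finset.Icc 1 N
      · exact (Finset.single_le_sum (f := fun m => l m)
          (fun _ _ => Nat.zero_le _) hm).trans (le_of_eq hsum')
      · rw [hout m hm]; omega
    refine ⟨hsum', hle, fun m hmk => ?_⟩
    by_cases hm : m ∈ Finset.Icc 1 N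
    · by_contra h
      have := Nat.le_of_dvd (Nat.pos_of_ne_zero h) (hdvd m hm)
      have := hle m
      omega
    · exact hout m hm
  refine Finset.sum_nbij'
    (fun l => fun i : Fin k =>
      (⟨min (l (i.1+1) / (i.1+1)) k, Nat.lt_succ_of_le (min_le_right _ _)⟩ : Fin (k+1)))
    (fun c => lOf k c) ?_ ?_ ?_ ?_ ?_
  · -- forward membership
    intro l hl
    rw [Finset.mem_filter] at hl
    obtain ⟨hmem, hdvd⟩ := hl
    obtain ⟨hsum, hle, hbig⟩ := lfacts l hmem hdvd
    simp only [Finset.mem_filter, Finset.mem_univ, true_and]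
    have hmin : ∀ i : Fin k, min (l (i.1+1) / (i.1+1)) k = l (i.1+1) / (i.1+1) :=
      fun i => min_eq_left (le_trans (Nat.div_le_self _ _) (hle _))
    calc ∑ i : Fin k, (i.1 + 1) * min (l (i.1+1) / (i.1+1)) k
        = ∑ i : Fin k, l (i.1+1) := by
          refine Finset.sum_congr rfl fun i _ => ?_
          rw [hmin i, Nat.mul_div_cancel' (hdvd (i.1+1)
            (Finset.mem_Icc.mpr ⟨by omega, by have := i.isLt; omega⟩))]
      _ = k := by
          rw [← sum_Icc_eq_fin N k hkN (fun m => l m) hbig]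
          exact hsum
  · -- backward membership
    intro c hc
    simp only [Finset.mem_filter, Finset.mem_univ, true_and] at hc
    rw [Finset.mem_filter, Finset.mem_finsuppAntidiag]
    refine ⟨⟨?_, ?_⟩, ?_⟩
    · rw [sum_Icc_eq_fin N k hkN (fun m => lOf k c m) (fun m hm => lOf_big k c m (Or.inr hm))]
      refine Eq.trans (Finset.sum_congr rfl fun i _ => ?_) hc
      exact lOf_apply k c i.1 i.isLt
    · intro m hm
      rw [Finsupp.mem_support_iff] at hm
      rw [Finset.mem_Icc]
      by_contra h
      exact hm (lOf_big k c m (by omega))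
    · intro m hm
      rw [Finset.mem_Icc] at hm
      by_cases h : m ≤ k
      · obtain ⟨j, rfl⟩ : ∃ j, m = j + 1 := ⟨m - 1, by omega⟩
        rw [lOf_apply k c j (by omega)]
        exact Dvd.intro _ rfl
      · rw [lOf_big k c m (by omega)]
        exact dvd_zero m
  · -- left inverse
    intro l hl
    rw [Finset.mem_filter] at hl
    obtain ⟨hmem, hdvd⟩ := hl
    obtain ⟨hsum, hle, hbig⟩ := lfacts l hmem hdvd
    ext m
    rcases Nat.eq_zero_or_pos m with rfl | hm
    · rw [lOf_big k _ 0 (Or.inl rfl)]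
      rw [Finset.mem_finsuppAntidiag] at hmem
      by_contra h
      have := hmem.2 (Finsupp.mem_support_iff.mpr fun hc => h hc.symm)
      simp at this
    · by_cases hmk : m ≤ k
      · obtain ⟨j, rfl⟩ : ∃ j, m = j + 1 := ⟨m - 1, by omega⟩
        rw [lOf_apply k _ j (by omega)]
        simp only
        rw [min_eq_left (le_trans (Nat.div_le_self _ _) (hle _))]
        rw [Nat.mul_div_cancel' (hdvd (j+1) (Finset.mem_Icc.mpr ⟨by omega, by omega⟩))]
      · rw [lOf_big k _ m (Or.inr (by omega)), hbig m (by omega)]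
  · -- right inverse
    intro c hc
    funext i
    apply Fin.ext
    show min (lOf k c (i.1+1) / (i.1+1)) k = (c i : ℕ)
    rw [lOf_apply k c i.1 i.isLt]
    have h1 : (i.1 + 1) * (c ⟨i.1, i.isLt⟩ : ℕ) / (i.1 + 1) = (c ⟨i.1, i.isLt⟩ : ℕ) :=
      Nat.mul_div_cancel_left _ (by omega)
    rw [h1]
    have h2 : (c ⟨i.1, i.isLt⟩ : ℕ) ≤ k := Nat.le_of_lt_succ (c _).isLt
    rw [min_eq_left h2]
  · -- value equality
    intro l hl
    rw [Finset.mem_filter] at hl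
    obtain ⟨hmem, hdvd⟩ := hl
    obtain ⟨hsum, hle, hbig⟩ := lfacts l hmem hdvd
    rw [prod_Icc_eq_fin N k hkN (fun m => ((l m / m : ℕ) + 1 : ℤ) ^ d)
      (fun m hm => by beta_reduce; rw [hbig m hm]; simp)]
    refine Finset.prod_congr rfl fun i _ => ?_
    have hm2 : min (l (i.1+1) / (i.1+1)) k = l (i.1+1) / (i.1+1) :=
      min_eq_left (le_trans (Nat.div_le_self _ _) (hle _))
    simp only [hm2]

lemma coeff_mul_congr (F G H : ℤ⟦X⟧) (n : ℕ)
    (h : ∀ j ≤ n, PowerSeries.coeff (R := ℤ) j F = PowerSeries.coeff (R := ℤ) j G) :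
    PowerSeries.coeff (R := ℤ) n (F * H) = PowerSeries.coeff (R := ℤ) n (G * H) := by
  rw [PowerSeries.coeff_mul, PowerSeries.coeff_mul]
  refine Finset.sum_congr rfl fun p hp => ?_
  rw [Finset.HasAntidiagonal.mem_antidiagonal] at hp
  rw [h p.1 (by omega)]

/-- The generating function identity
`∑_{n≥0} s_d(n) qⁿ = ∏_{n≥1} A_d(qⁿ) / (1 - qⁿ)^{d+1}` in `ℤ⟦q⟧`, stated
coefficient-wise after clearing denominators: both sides of the infinite-product
identity have `n`-th coefficient equal to that of the partial product over the first
`N ≥ n` factors, since every further factor is `1 + O(q^{N+1})`. -/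
theorem schmidt_dfold_generating_function (d : ℕ) (hd : 1 ≤ d)
    (n N : ℕ) (hnN : n ≤ N) :
    PowerSeries.coeff (R := ℤ) n
        ((PowerSeries.mk fun m => (sFold d m : ℤ)) *
          ∏ m ∈ Finset.Icc 1 N, (1 - (X : ℤ⟦X⟧) ^ m) ^ (d + 1)) =
      PowerSeries.coeff (R := ℤ) n
        (∏ m ∈ Finset.Icc 1 N, Polynomial.aeval ((X : ℤ⟦X⟧) ^ m) (eulerian d)) := by
  have hm0 : ∀ m ∈ Finset.Icc 1 N, m ≠ 0 := by
    intro m hm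
    rw [Finset.mem_Icc] at hm
    omega
  have hprod : ∀ m ∈ Finset.Icc 1 N, Polynomial.aeval ((X : ℤ⟦X⟧) ^ m) (eulerian d)
      = (1 - (X : ℤ⟦X⟧) ^ m) ^ (d + 1) * sp m (Eser d) := by
    intro m hm
    rw [← sp_coe_poly m (hm0 m hm), euler_id, sp_mul m (hm0 m hm), sp_pow m (hm0 m hm),
      sp_one_sub_X m (hm0 m hm)]
  rw [Finset.prod_congr rfl hprod, Finset.prod_mul_distrib,
    mul_comm (∏ m ∈ Finset.Icc 1 N, (1 - (X : ℤ⟦X⟧) ^ m) ^ (d + 1))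
      (∏ m ∈ Finset.Icc 1 N, sp m (Eser d))]
  refine coeff_mul_congr _ _ _ n (fun j hj => ?_)
  rw [PowerSeries.coeff_mk, coeff_prod_Em d j N (le_trans hj hnN),
    sFold_eq_card d j hd, card_TT d j]
  push_cast
  rfl
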